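/- Reduction of the microcanonical velocity ODE to a linear second-order ODE. Let d ≥ 1, let g ∈ ℝ^d be a fixed vector, and let y : ℝ → ℝ^d be twice differentiable with y''(t) = ⟨g, y(t)⟩ · g for all t. Suppose ⟨g, y(t)⟩ ≠ 0 for all t in an open interval I, and define u : I → ℝ^d by u(t) = y'(t) / ⟨g, y(t)⟩. Then for all t ∈ I, u'(t) = g − ⟨g, u(t)⟩ · u(t), i.e., u solves the Riccati vector equation u' = (I − u uᵀ) g. -/

import Mathlib

open scoped RealInnerProductSpace

/-- Reduction of the microcanonical velocity ODE to a linear second-order ODE.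
If `y : ℝ → ℝ^d` is twice differentiable with `y'' t = ⟪g, y t⟫ • g`
(the linear ODE `ÿ = (g gᵀ) y`), and `⟪g, y t⟫ ≠ 0` on an open interval
`I = (a, b)`, then `u t = (⟪g, y t⟫)⁻¹ • y' t` solves the Riccati vector
equation `u' = g - ⟪g, u⟫ • u` on `I`. -/
theorem riccati_substitution (d : ℕ) (hd : 1 ≤ d)
    (g : EuclideanSpace ℝ (Fin d)) (y dy : ℝ → EuclideanSpace ℝ (Fin d))
    (hy : ∀ t, HasDerivAt y (dy t) t)
    (hdy : ∀ t, HasDerivAt dy (⟪g, y t⟫ • g) t)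
    (a b : ℝ)
    (hne : ∀ t ∈ Set.Ioo a b, ⟪g, y t⟫ ≠ 0) :
    ∀ t ∈ Set.Ioo a b,
      HasDerivAt (fun s => (⟪g, y s⟫)⁻¹ • dy s)
        (g - ⟪g, (⟪g, y t⟫)⁻¹ • dy t⟫ • ((⟪g, y t⟫)⁻¹ • dy t)) t := by
  intro t ht
  have hc0 : ⟪g, y t⟫ ≠ 0 := hne t ht
  have hc : HasDerivAt (fun s => ⟪g, y s⟫) ⟪g, dy t⟫ t := by
    have := (hasDerivAt_const t g).inner ℝ (hy t)
    simpa using this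
  have hcinv : HasDerivAt (fun s => (⟪g, y s⟫)⁻¹)
      (-⟪g, dy t⟫ / (⟪g, y t⟫ ^ 2)) t := hc.inv hc0
  have h := hcinv.smul (hdy t)
  refine h.congr_deriv ?_
  symm
  rw [inner_smul_right, smul_smul]
  have h2 : (⟪g, y t⟫ : ℝ) ^ 2 ≠ 0 := pow_ne_zero 2 hc0
  rw [sub_eq_iff_eq_add, smul_smul, inv_mul_cancel₀ hc0, one_smul, add_assoc, ← add_smul]
  have hz : -⟪g, dy t⟫ / ⟪g, y t⟫ ^ 2 + (⟪g, y t⟫)⁻¹ * ⟪g, dy t⟫ * (⟪g, y t⟫)⁻¹ = 0 := by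
    field_simp
    ring
  rw [hz, zero_smul, add_zero]
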